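/- (Convexity of the full image versus the image of the sphere for homogeneous maps.) Let n ≥ 1 and let f be a homogeneous quadratic map, f x k = x ⬝ᵥ (A k).mulVec x. Define the extended map g : (Fin n → ℝ) → (Fin m → ℝ) × ℝ by g x = (f x, ∑ i, (x i)^2). Then Set.range g is a convex set if and only if the image of the unit sphere H := f '' {x | ∑ i, (x i)^2 = 1} is a convex set. -/

import Mathlib

open Matrix

theorem full_image_convex_iff_sphere_image_convex (n m : ℕ) (hn : 1 ≤ n)
    (A : Fin m → Matrix (Fin n) (Fin n) ℝ) (hA : ∀ k, (A k)ᵀ = A k)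
    (f : (Fin n → ℝ) → (Fin m → ℝ))
    (hf : ∀ x k, f x k = x ⬝ᵥ (A k).mulVec x)
    (g : (Fin n → ℝ) → (Fin m → ℝ) × ℝ)
    (hg : ∀ x, g x = (f x, ∑ i, (x i) ^ 2)) :
    Convex ℝ (Set.range g) ↔ Convex ℝ (f '' {x : Fin n → ℝ | ∑ i, (x i) ^ 2 = 1}) := by
  -- homogeneity of f
  have hhom : ∀ (c : ℝ) (x : Fin n → ℝ), f (c • x) = (c ^ 2) • f x := by
    intro c x
    funext k
    simp only [hf, Matrix.mulVec_smul, smul_dotProduct, dotProduct_smul, Pi.smul_apply,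
      smul_eq_mul]
    ring
  -- a point on the sphere
  have he : ∃ e : Fin n → ℝ, ∑ i, (e i) ^ 2 = 1 := by
    refine ⟨Pi.single ⟨0, hn⟩ 1, ?_⟩
    rw [Finset.sum_eq_single ⟨0, hn⟩]
    · simp
    · intro i _ hi; simp [Pi.single_apply, hi]
    · simp
  obtain ⟨e, he⟩ := he
  -- key normalization lemma
  have key : ∀ x : Fin n → ℝ, ∃ z : Fin n → ℝ,
      (∑ i, (z i) ^ 2 = 1) ∧ f x = (∑ i, (x i) ^ 2) • f z := by
    intro x
    by_cases hs : ∑ i, (x i) ^ 2 = 0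
    · refine ⟨e, he, ?_⟩
      have hx0 : x = 0 := by
        funext i
        have := (Finset.sum_eq_zero_iff_of_nonneg (fun i _ => sq_nonneg (x i))).1 hs i
          (Finset.mem_univ i)
        exact pow_eq_zero_iff (by norm_num) |>.1 this
      have : f x = 0 := by
        funext k; simp [hf, hx0, Matrix.mulVec_zero]
      rw [this, hs, zero_smul]
    · have hs' : 0 < ∑ i, (x i) ^ 2 :=
        lt_of_le_of_ne (Finset.sum_nonneg fun i _ => sq_nonneg (x i)) (Ne.symm hs)
      set s := ∑ i, (x i) ^ 2 with hsdef
      refine ⟨(Real.sqrt s)⁻¹ • x, ?_, ?_⟩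
      · have : ∑ i, (((Real.sqrt s)⁻¹ • x) i) ^ 2 = ((Real.sqrt s)⁻¹) ^ 2 * s := by
          rw [Finset.mul_sum]; congr 1; funext i; simp [mul_pow]
        rw [this, inv_pow, Real.sq_sqrt hs'.le, inv_mul_cancel₀ hs]
      · have hsq : Real.sqrt s ≠ 0 := ne_of_gt (Real.sqrt_pos.2 hs')
        have : x = Real.sqrt s • ((Real.sqrt s)⁻¹ • x) := by
          rw [smul_smul, mul_inv_cancel₀ hsq, one_smul]
        calc f x = f (Real.sqrt s • ((Real.sqrt s)⁻¹ • x)) := by rw [← this]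
          _ = (Real.sqrt s ^ 2) • f ((Real.sqrt s)⁻¹ • x) := hhom _ _
          _ = s • f ((Real.sqrt s)⁻¹ • x) := by rw [Real.sq_sqrt hs'.le]
  constructor
  · intro hconv
    rintro p ⟨x₁, hx₁, rfl⟩ q ⟨x₂, hx₂, rfl⟩ a b ha hb hab
    have h1 : g x₁ ∈ Set.range g := ⟨x₁, rfl⟩
    have h2 : g x₂ ∈ Set.range g := ⟨x₂, rfl⟩
    obtain ⟨z, hz⟩ := hconv h1 h2 ha hb hab
    rw [hg z, hg x₁, hg x₂] at hz
    have hfst := congrArg Prod.fst hz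
    have hsnd := congrArg Prod.snd hz
    simp only [Prod.smul_mk, Prod.mk_add_mk, smul_eq_mul] at hfst hsnd
    refine ⟨z, ?_, hfst⟩
    simp only [Set.mem_setOf_eq]
    rw [hsnd, hx₁, hx₂] at *
    linarith [hsnd]
  · intro hconv
    rintro p ⟨x₁, rfl⟩ q ⟨x₂, rfl⟩ a b ha hb hab
    obtain ⟨z₁, hz₁, hfx₁⟩ := key x₁
    obtain ⟨z₂, hz₂, hfx₂⟩ := key x₂
    set s₁ := ∑ i, (x₁ i) ^ 2 with hs₁def
    set s₂ := ∑ i, (x₂ i) ^ 2 with hs₂def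
    have hs₁ : 0 ≤ s₁ := Finset.sum_nonneg fun i _ => sq_nonneg _
    have hs₂ : 0 ≤ s₂ := Finset.sum_nonneg fun i _ => sq_nonneg _
    set t := a * s₁ + b * s₂ with htdef
    have ht : 0 ≤ t := add_nonneg (mul_nonneg ha hs₁) (mul_nonneg hb hs₂)
    rcases eq_or_lt_of_le ht with ht0 | htpos
    · -- t = 0 case: combination is g 0
      have has : a * s₁ = 0 := by nlinarith [mul_nonneg ha hs₁, mul_nonneg hb hs₂]
      have hbs : b * s₂ = 0 := by nlinarith [mul_nonneg ha hs₁, mul_nonneg hb hs₂]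
      refine ⟨0, ?_⟩
      have hf0 : f 0 = 0 := by funext k; simp [hf]
      rw [hg 0, hg x₁, hg x₂, hf0]
      have e1 : a • f x₁ = 0 := by
        rw [hfx₁, smul_smul, has, zero_smul]
      have e2 : b • f x₂ = 0 := by
        rw [hfx₂, smul_smul, hbs, zero_smul]
      ext k
      · simp [Prod.smul_mk, e1, e2, funext_iff.1 e1 k, funext_iff.1 e2 k]
      · simp [← hs₁def, ← hs₂def, has, hbs]
    · -- t > 0
      have htne : t ≠ 0 := htpos.ne'
      have hm1 : f z₁ ∈ f '' {x : Fin n → ℝ | ∑ i, (x i) ^ 2 = 1} := ⟨z₁, hz₁, rfl⟩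
      have hm2 : f z₂ ∈ f '' {x : Fin n → ℝ | ∑ i, (x i) ^ 2 = 1} := ⟨z₂, hz₂, rfl⟩
      have hc1 : 0 ≤ a * s₁ / t := div_nonneg (mul_nonneg ha hs₁) ht
      have hc2 : 0 ≤ b * s₂ / t := div_nonneg (mul_nonneg hb hs₂) ht
      have hcsum : a * s₁ / t + b * s₂ / t = 1 := by
        field_simp
        exact htdef.symm
      obtain ⟨z, hz, hfz⟩ := hconv hm1 hm2 hc1 hc2 hcsum
      refine ⟨Real.sqrt t • z, ?_⟩
      have hzn : ∑ i, ((Real.sqrt t • z) i) ^ 2 = t := by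
        have : ∑ i, ((Real.sqrt t • z) i) ^ 2 = Real.sqrt t ^ 2 * ∑ i, (z i) ^ 2 := by
          rw [Finset.mul_sum]; congr 1; funext i; simp [mul_pow]
        rw [this, hz, mul_one, Real.sq_sqrt htpos.le]
      have hfx : f (Real.sqrt t • z) = t • f z := by
        rw [hhom, Real.sq_sqrt htpos.le]
      rw [hg, hg x₁, hg x₂, hzn, hfx, hfz]
      ext k
      · simp only [Prod.smul_mk, Prod.mk_add_mk, Prod.fst, Pi.add_apply, Pi.smul_apply,
          smul_eq_mul]
        have h1 := funext_iff.1 hfx₁ k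
        have h2 := funext_iff.1 hfx₂ k
        simp only [Pi.smul_apply, smul_eq_mul] at h1 h2
        rw [h1, h2]
        field_simp
      · simp only [Prod.smul_mk, Prod.mk_add_mk, smul_eq_mul]
        exact htdef
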